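/- arXiv:1711.04307 — 5 statements merged into one kernel-verified Lean document; each statement's English description precedes it below -/
import Mathlib

section
/- The second derivative of ℓ satisfies ℓ''(r) = -2r·(1/2 - r)^{-4}·e^{-(1/2-r)^{-1}} for 0 ≤ r < 1/2 and ℓ''(r) = 0 for r ≥ 1/2; ℓ'' < 0 on (0,1/2); the minimum of ℓ'' over [0,∞) is attained at r = √3/6 with value -3^{-1/2}(3+√3)^4·e^{-(3+√3)}; and for all r ≥ 0 one has ℓ''(r) ≥ -3^{-1/2}(3+√3)^4·e^{-(3+√3)} > -20e^{-2}. -/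
/-- The modifier function `ℓ` from the paper:
`ℓ(r) = e^{-2} - e^{-2/(1-2r)}` for `r < 1/2` and `ℓ(r) = e^{-2}` for `r ≥ 1/2`. -/
noncomputable def ell : ℝ → ℝ := fun r =>
  if r < 1/2 then Real.exp (-2) - Real.exp (-2 / (1 - 2*r)) else Real.exp (-2)

open Real Polynomial

lemma glue_hasDerivAt (x : ℝ) :
    HasDerivAt expNegInvGlue (x⁻¹ ^ 2 * expNegInvGlue x) x := by
  have h := expNegInvGlue.hasDerivAt_polynomial_eval_inv_mul (1 : ℝ[X]) x
  simpa using h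

lemma glue_deriv : deriv expNegInvGlue = fun x => x⁻¹ ^ 2 * expNegInvGlue x :=
  funext fun x => (glue_hasDerivAt x).deriv

lemma glue_hasDerivAt2 (x : ℝ) :
    HasDerivAt (deriv expNegInvGlue) ((x⁻¹ ^ 4 - 2 * x⁻¹ ^ 3) * expNegInvGlue x) x := by
  rw [glue_deriv]
  have h := expNegInvGlue.hasDerivAt_polynomial_eval_inv_mul (X ^ 2 : ℝ[X]) x
  have e1 : (fun y : ℝ => (X ^ 2 : ℝ[X]).eval y⁻¹ * expNegInvGlue y)
      = fun y => y⁻¹ ^ 2 * expNegInvGlue y := by funext y; simp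
  rw [e1] at h
  convert h using 2
  simp
  ring

lemma glue_pos_eval {x : ℝ} (hx : 0 < x) : expNegInvGlue x = Real.exp (-x⁻¹) := by
  simp [expNegInvGlue, not_le.mpr hx]

lemma ell_eq : ell = fun r => Real.exp (-2) - expNegInvGlue (1/2 - r) := by
  funext r
  unfold ell expNegInvGlue
  by_cases h : r < 1/2
  · rw [if_pos h, if_neg (by linarith)]
    have h0 : (1 : ℝ) - 2*r > 0 := by linarith
    have : -2 / (1 - 2*r) = -(1/2 - r)⁻¹ := by
      have h1 : (1/2 - r) ≠ 0 := ne_of_gt (by linarith : (0:ℝ) < 1/2 - r)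
      field_simp
    rw [this]
  · rw [if_neg h, if_pos (by linarith), sub_zero]

lemma inner_hasDerivAt (r : ℝ) : HasDerivAt (fun r : ℝ => 1/2 - r) (-1) r := by
  simpa using (hasDerivAt_id r).const_sub (1/2 : ℝ)

lemma ell_hasDerivAt (r : ℝ) :
    HasDerivAt ell ((1/2 - r)⁻¹ ^ 2 * expNegInvGlue (1/2 - r)) r := by
  rw [ell_eq]
  have h := (glue_hasDerivAt (1/2 - r)).comp r (inner_hasDerivAt r)
  simp only [Function.comp_def] at h
  have h2 := (hasDerivAt_const r (Real.exp (-2))).fun_sub h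
  exact h2.congr_deriv (by ring)

lemma deriv_ell : deriv ell = deriv expNegInvGlue ∘ (fun r => 1/2 - r) := by
  funext r
  rw [(ell_hasDerivAt r).deriv, glue_deriv]
  rfl

lemma deriv2_ell (r : ℝ) :
    deriv (deriv ell) r
      = -(((1/2 - r)⁻¹ ^ 4 - 2 * (1/2 - r)⁻¹ ^ 3) * expNegInvGlue (1/2 - r)) := by
  rw [deriv_ell]
  have h := (glue_hasDerivAt2 (1/2 - r)).comp r (inner_hasDerivAt r)
  rw [h.deriv]
  ring

noncomputable def phi : ℝ → ℝ := fun u => (u - 2) * u ^ 3 * Real.exp (-u)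

lemma phi_hasDerivAt (u : ℝ) :
    HasDerivAt phi (Real.exp (-u) * (-u^4 + 6*u^3 - 6*u^2)) u := by
  have h1 : HasDerivAt (fun u : ℝ => (u - 2) * u ^ 3) (1 * u^3 + (u-2) * (3*u^2)) u := by
    have := ((hasDerivAt_id u).sub_const 2).fun_mul (hasDerivAt_pow 3 u)
    simpa using this
  have h2 : HasDerivAt (fun u : ℝ => Real.exp (-u)) (-Real.exp (-u)) u := by
    simpa [Function.comp_def] using (Real.hasDerivAt_exp (-u)).comp u (hasDerivAt_neg u)
  have := h1.fun_mul h2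
  exact this.congr_deriv (by ring)

lemma sqrt3_sq : Real.sqrt 3 ^ 2 = 3 := Real.sq_sqrt (by norm_num)
lemma sqrt3_gt : 1.732 < Real.sqrt 3 := by
  rw [show (1.732:ℝ) = Real.sqrt (1.732^2) by rw [Real.sqrt_sq]; norm_num]
  exact Real.sqrt_lt_sqrt (by norm_num) (by norm_num)
lemma sqrt3_lt : Real.sqrt 3 < 1.7321 := by
  rw [show (1.7321:ℝ) = Real.sqrt (1.7321^2) by rw [Real.sqrt_sq]; norm_num]
  exact Real.sqrt_lt_sqrt (by norm_num) (by norm_num)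

lemma phi_max : ∀ u : ℝ, 2 ≤ u → phi u ≤ phi (3 + Real.sqrt 3) := by
  set s := Real.sqrt 3 with hs
  have hs1 : 1.732 < s := sqrt3_gt
  have hs2 : s < 1.7321 := sqrt3_lt
  have hssq : s ^ 2 = 3 := sqrt3_sq
  have hdiff : Differentiable ℝ phi := fun u => (phi_hasDerivAt u).differentiableAt
  have hmono : MonotoneOn phi (Set.Icc 2 (3 + s)) := by
    apply monotoneOn_of_deriv_nonneg (convex_Icc _ _) hdiff.continuous.continuousOn
      hdiff.differentiableOn
    intro u hu
    rw [interior_Icc] at hu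
    obtain ⟨hu1, hu2⟩ := hu
    rw [(phi_hasDerivAt u).deriv]
    have key : 0 ≤ -u^2 + 6*u - 6 := by
      nlinarith [mul_nonneg (by linarith : (0:ℝ) ≤ u - 2) (by linarith : (0:ℝ) ≤ 3 + s - u),
        mul_nonneg (by linarith : (0:ℝ) ≤ s - 1) (by linarith : (0:ℝ) ≤ 3 + s - u)]
    nlinarith [Real.exp_pos (-u), mul_nonneg key (sq_nonneg u)]
  have hanti : AntitoneOn phi (Set.Ici (3 + s)) := by
    apply antitoneOn_of_deriv_nonpos (convex_Ici _) hdiff.continuous.continuousOn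
      hdiff.differentiableOn
    intro u hu
    rw [interior_Ici] at hu
    have hu1 : 3 + s < u := hu
    rw [(phi_hasDerivAt u).deriv]
    have key : 0 ≤ u^2 - 6*u + 6 := by
      nlinarith [mul_nonneg (by linarith : (0:ℝ) ≤ u - (3+s)) (by linarith : (0:ℝ) ≤ u - (3-s))]
    nlinarith [Real.exp_pos (-u), mul_nonneg key (sq_nonneg u)]
  intro u hu
  rcases le_total u (3 + s) with h | h
  · exact hmono ⟨hu, h⟩ ⟨by linarith, le_refl _⟩ h
  · exact hanti (Set.mem_Ici.2 (le_refl _)) (Set.mem_Ici.2 h) h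

lemma deriv2_ell_lt_half {r : ℝ} (h : r < 1/2) :
    deriv (deriv ell) r = -phi ((1/2 - r)⁻¹) := by
  have hs : 0 < 1/2 - r := by linarith
  rw [deriv2_ell, glue_pos_eval hs]
  unfold phi
  ring

lemma deriv2_ell_formula {r : ℝ} (h : r < 1/2) :
    deriv (deriv ell) r = -2*r * (1/2 - r) ^ (-4 : ℤ) * Real.exp (-(1/2 - r)⁻¹) := by
  have hs : 0 < 1/2 - r := by linarith
  have hsne : (1/2 - r) ≠ 0 := ne_of_gt hs
  rw [deriv2_ell, glue_pos_eval hs]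
  have hz : (1/2 - r) ^ (-4 : ℤ) = ((1/2 - r)⁻¹) ^ 4 := by
    rw [show ((-4:ℤ)) = -((4:ℕ):ℤ) by norm_num, zpow_neg, zpow_natCast, ← inv_pow]
  rw [hz]
  have hx : (1/2 - r) * (1/2 - r)⁻¹ = 1 := mul_inv_cancel₀ hsne
  have hkey : -(((1/2 - r)⁻¹ ^ 4 - 2 * (1/2 - r)⁻¹ ^ 3)) = -2*r * ((1/2 - r)⁻¹)^4 := by
    linear_combination (-2 * ((1/2 - r)⁻¹)^3) * hx
  calc -(((1/2 - r)⁻¹ ^ 4 - 2 * (1/2 - r)⁻¹ ^ 3) * Real.exp (-(1/2 - r)⁻¹))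
      = -(((1/2 - r)⁻¹ ^ 4 - 2 * (1/2 - r)⁻¹ ^ 3)) * Real.exp (-(1/2 - r)⁻¹) := by ring
    _ = -2*r * ((1/2 - r)⁻¹)^4 * Real.exp (-(1/2 - r)⁻¹) := by rw [hkey]

/-- `ℓ''(r) = -2r (1/2 - r)⁻⁴ e^{-(1/2-r)⁻¹}` on `[0, 1/2)` and `ℓ''(r) = 0` for `r ≥ 1/2`;
`ℓ'' < 0` on `(0, 1/2)`; the minimum of `ℓ''` over `[0,∞)` is attained at `r = √3/6` with value
`-3^{-1/2}(3+√3)⁴ e^{-(3+√3)}`, and this value is `> -20 e^{-2}`. -/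
theorem deriv2_ell_properties :
    (∀ r : ℝ, 0 ≤ r → r < 1/2 →
      deriv (deriv ell) r = -2*r * (1/2 - r) ^ (-4 : ℤ) * Real.exp (-(1/2 - r)⁻¹)) ∧
    (∀ r : ℝ, 1/2 ≤ r → deriv (deriv ell) r = 0) ∧
    (∀ r : ℝ, 0 < r → r < 1/2 → deriv (deriv ell) r < 0) ∧
    deriv (deriv ell) (Real.sqrt 3 / 6)
      = -(Real.sqrt 3)⁻¹ * (3 + Real.sqrt 3)^4 * Real.exp (-(3 + Real.sqrt 3)) ∧
    (∀ r : ℝ, 0 ≤ r →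
      deriv (deriv ell) r
        ≥ -(Real.sqrt 3)⁻¹ * (3 + Real.sqrt 3)^4 * Real.exp (-(3 + Real.sqrt 3))) ∧
    -(Real.sqrt 3)⁻¹ * (3 + Real.sqrt 3)^4 * Real.exp (-(3 + Real.sqrt 3))
      > -20 * Real.exp (-2) := by
  have hs1 : 1.732 < Real.sqrt 3 := sqrt3_gt
  have hs2 : Real.sqrt 3 < 1.7321 := sqrt3_lt
  have hssq : Real.sqrt 3 ^ 2 = 3 := sqrt3_sq
  have hsne : Real.sqrt 3 ≠ 0 := by positivity
  set s := Real.sqrt 3 with hsdef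
  have hsinv : s⁻¹ = s / 3 := by
    apply inv_eq_of_mul_eq_one_right
    rw [mul_div_assoc']
    rw [div_eq_one_iff_eq (by norm_num)]
    nlinarith [hssq]
  -- the minimum value equals -phi (3 + s)
  have hval : -(s)⁻¹ * (3 + s)^4 * Real.exp (-(3 + s)) = -phi (3 + s) := by
    unfold phi
    rw [hsinv]
    have key : s / 3 * (3 + s)^4 = (3 + s - 2) * (3 + s)^3 := by
      linear_combination ((3 + s)^3 / 3) * hssq
    linear_combination (-(Real.exp (-(3 + s)))) * key
  refine ⟨fun r _ h => deriv2_ell_formula h, ?_, ?_, ?_, ?_, ?_⟩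
  · -- zero for r ≥ 1/2
    intro r hr
    rw [deriv2_ell, expNegInvGlue.zero_of_nonpos (by linarith)]
    ring
  · -- negative on (0, 1/2)
    intro r hr0 hr
    rw [deriv2_ell_formula hr]
    have h1 : 0 < (1/2 - r) ^ (-4 : ℤ) := by
      apply zpow_pos
      linarith
    have h2 : 0 < Real.exp (-(1/2 - r)⁻¹) := Real.exp_pos _
    nlinarith [mul_pos h1 h2]
  · -- value at sqrt 3 / 6
    have hr : s / 6 < 1/2 := by linarith
    rw [deriv2_ell_lt_half hr, hval]
    congr 1
    unfold phi
    have hinv : (1/2 - s/6)⁻¹ = 3 + s := by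
      apply inv_eq_of_mul_eq_one_right
      nlinarith [hssq]
    rw [hinv]
  · -- global lower bound
    intro r hr0
    rcases lt_or_ge r (1/2) with h | h
    · rw [deriv2_ell_lt_half h, hval]
      have hspos : 0 < 1/2 - r := by linarith
      have hu : 2 ≤ (1/2 - r)⁻¹ := by
        rw [show ((1/2 - r)⁻¹) = 1/(1/2 - r) from (one_div _).symm, le_div_iff₀ hspos]
        linarith
      exact neg_le_neg (phi_max _ hu)
    · have h0 : deriv (deriv ell) r = 0 := by
        rw [deriv2_ell, expNegInvGlue.zero_of_nonpos (by linarith)]; ring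
      rw [h0, ge_iff_le, hval]
      have : 0 ≤ phi (3 + s) := by
        unfold phi
        have h1 : (0:ℝ) ≤ 3 + s - 2 := by linarith
        have h2 : (0:ℝ) ≤ (3 + s)^3 := by positivity
        positivity
      linarith
  · -- numeric bound
    have he1 : 2.7182 < Real.exp 1 := by
      have := Real.exp_one_gt_d9
      linarith
    have h3 : s^3 = 3*s := by linear_combination s * hssq
    have h4 : s^4 = 9 := by linear_combination (s^2 + 3) * hssq
    have h5 : s^5 = 9*s := by linear_combination (s^3 + 3*s) * hssq
    have hes : (5.6:ℝ) ≤ Real.exp s := by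
      have hsum := Real.sum_le_exp_of_nonneg (Real.sqrt_nonneg 3) 6
      simp [Finset.sum_range_succ, Nat.factorial] at hsum
      rw [← hsdef] at hsum
      nlinarith [hsum, h3, h4, h5, hssq]
    have hE : Real.exp (-(3+s)) * (Real.exp 1 * Real.exp s) = Real.exp (-2) := by
      rw [← Real.exp_add, ← Real.exp_add]
      ring_nf
    have hb1 : (3+s)^2 < 22.4 := by nlinarith
    have hb2 : (3+s)^4 < 501.8 := by nlinarith [hb1, sq_nonneg (3+s)]
    have hmain : s/3 * (3+s)^4 < 20 * (Real.exp 1 * Real.exp s) := by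
      nlinarith [hb2, hs1, hs2, he1, hes, Real.exp_pos 1, Real.exp_pos s,
        mul_pos (Real.exp_pos 1) (Real.exp_pos s)]
    have hEpos : 0 < Real.exp (-(3+s)) := Real.exp_pos _
    have hstep := mul_lt_mul_of_pos_right hmain hEpos
    rw [hsinv]
    nlinarith [hstep, hE]
end

section
/- On the interval [0, t₀] the function h is nonincreasing (and strictly decreasing on (0, t₀]) and satisfies 0 ≤ h(t) ≤ 1 = h(0) for all t ∈ [0, t₀]. -/
/-- The comparison function `h(t) = cos(√k t) - (θ/√k) sin(√k t)` (case `k > 0`). -/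
noncomputable def hfun (k θ : ℝ) (t : ℝ) : ℝ :=
  Real.cos (Real.sqrt k * t) - (θ / Real.sqrt k) * Real.sin (Real.sqrt k * t)

/-- The first zero `t₀ = (1/√k) arcsin(√(k/(k+θ²)))` of `h`. -/
noncomputable def t0 (k θ : ℝ) : ℝ :=
  (1 / Real.sqrt k) * Real.arcsin (Real.sqrt (k / (k + θ^2)))

/-- On `[0, t₀]` the function `h` is nonincreasing (strictly decreasing on `(0, t₀]`)
and satisfies `0 ≤ h(t) ≤ 1 = h(0)` for all `t ∈ [0, t₀]`. -/
theorem hfun_monotone (k θ : ℝ) (hk : 0 < k) (hθ : 0 ≤ θ) :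
    AntitoneOn (hfun k θ) (Set.Icc 0 (t0 k θ)) ∧
    StrictAntiOn (hfun k θ) (Set.Ioc 0 (t0 k θ)) ∧
    hfun k θ 0 = 1 ∧
    ∀ t ∈ Set.Icc (0:ℝ) (t0 k θ), 0 ≤ hfun k θ t ∧ hfun k θ t ≤ 1 := by
  have hs : 0 < Real.sqrt k := Real.sqrt_pos.mpr hk
  set s := Real.sqrt k with hs_def
  have hk' : 0 < k + θ ^ 2 := by positivity
  set c := Real.sqrt (k / (k + θ ^ 2)) with hc_def
  have hc0 : 0 < c := Real.sqrt_pos.mpr (by positivity)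
  have hc1 : c ≤ 1 := by
    rw [hc_def]
    have h1 : k / (k + θ ^ 2) ≤ 1 := by rw [div_le_one hk']; nlinarith
    calc Real.sqrt (k / (k + θ ^ 2)) ≤ Real.sqrt 1 := Real.sqrt_le_sqrt h1
      _ = 1 := Real.sqrt_one
  have harc_pos : 0 < Real.arcsin c := Real.arcsin_pos.mpr hc0
  have harc_le : Real.arcsin c ≤ Real.pi / 2 := Real.arcsin_le_pi_div_two c
  have ht0 : t0 k θ = (1 / s) * Real.arcsin c := rfl
  have ht0pos : 0 < t0 k θ := by
    rw [ht0]; positivity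
  have hst0 : s * t0 k θ = Real.arcsin c := by
    rw [ht0]; field_simp
  -- derivative
  have hderiv : ∀ t : ℝ, HasDerivAt (hfun k θ)
      (-s * Real.sin (s * t) - θ * Real.cos (s * t)) t := by
    intro t
    have h1 : HasDerivAt (fun t : ℝ => s * t) s t := by
      simpa using (hasDerivAt_id t).const_mul s
    have h2 := h1.cos
    have h3 := (h1.sin).const_mul (θ / s)
    have h4 := h2.sub h3
    convert h4 using 1
    · rfl
    · rfl
    · rfl
    field_simp
  have hcont : Continuous (hfun k θ) := by
    exact (Real.continuous_cos.comp (continuous_const.mul continuous_id)).sub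
      (continuous_const.mul (Real.continuous_sin.comp (continuous_const.mul continuous_id)))
  -- angle bounds
  have hangle : ∀ x ∈ Set.Ioo (0:ℝ) (t0 k θ),
      0 < s * x ∧ s * x ≤ Real.pi / 2 ∧ s * x < Real.pi := by
    intro x hx
    have h1 : 0 < s * x := mul_pos hs hx.1
    have h2 : s * x ≤ Real.arcsin c := by
      rw [← hst0]
      exact mul_le_mul_of_nonneg_left hx.2.le hs.le
    have h3 : s * x ≤ Real.pi / 2 := h2.trans harc_le
    exact ⟨h1, h3, h3.trans_lt (by linarith [Real.pi_pos])⟩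
  have hderiv_nonpos : ∀ x ∈ Set.Ioo (0:ℝ) (t0 k θ), deriv (hfun k θ) x ≤ 0 := by
    intro x hx
    obtain ⟨h1, h2, h3⟩ := hangle x hx
    rw [(hderiv x).deriv]
    have hsin : 0 ≤ Real.sin (s * x) := Real.sin_nonneg_of_nonneg_of_le_pi h1.le h3.le
    have hcos : 0 ≤ Real.cos (s * x) := Real.cos_nonneg_of_mem_Icc ⟨by linarith [Real.pi_pos], h2⟩
    nlinarith [mul_nonneg hs.le hsin, mul_nonneg hθ hcos]
  have hanti : AntitoneOn (hfun k θ) (Set.Icc 0 (t0 k θ)) := by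
    apply antitoneOn_of_deriv_nonpos (convex_Icc _ _) hcont.continuousOn
      (fun x _ => ((hderiv x).differentiableAt).differentiableWithinAt)
    intro x hx
    rw [interior_Icc] at hx
    exact hderiv_nonpos x hx
  have hstrict : StrictAntiOn (hfun k θ) (Set.Ioc 0 (t0 k θ)) := by
    apply strictAntiOn_of_deriv_neg (convex_Ioc _ _) hcont.continuousOn
    intro x hx
    rw [interior_Ioc] at hx
    obtain ⟨h1, h2, h3⟩ := hangle x hx
    rw [(hderiv x).deriv]
    have hsin : 0 < Real.sin (s * x) := Real.sin_pos_of_pos_of_lt_pi h1 h3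
    have hcos : 0 ≤ Real.cos (s * x) := Real.cos_nonneg_of_mem_Icc ⟨by linarith [Real.pi_pos], h2⟩
    nlinarith [mul_pos hs hsin, mul_nonneg hθ hcos]
  have h0 : hfun k θ 0 = 1 := by simp [hfun]
  -- value at t0
  have hc_sq : c ^ 2 = k / (k + θ ^ 2) := Real.sq_sqrt (by positivity)
  have hcsplit : c = s / Real.sqrt (k + θ ^ 2) := by
    rw [hc_def, Real.sqrt_div hk.le]
  have hθsq : Real.sqrt (θ ^ 2 / (k + θ ^ 2)) = θ / Real.sqrt (k + θ ^ 2) := by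
    rw [Real.sqrt_div (by positivity), Real.sqrt_sq hθ]
  have hht0 : hfun k θ (t0 k θ) = 0 := by
    have hc_mem : c ∈ Set.Icc (-1 : ℝ) 1 := ⟨by linarith, hc1⟩
    unfold hfun
    rw [← hs_def, hst0, Real.sin_arcsin hc_mem.1 hc_mem.2, Real.cos_arcsin, hc_sq]
    have : (1 : ℝ) - k / (k + θ ^ 2) = θ ^ 2 / (k + θ ^ 2) := by field_simp; ring
    rw [this, hθsq, hcsplit]
    field_simp
    ring
  refine ⟨hanti, hstrict, h0, fun t ht => ?_⟩
  have h1 : hfun k θ t ≤ hfun k θ 0 :=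
    hanti ⟨le_refl 0, ht0pos.le⟩ ht ht.1
  have h2 : hfun k θ (t0 k θ) ≤ hfun k θ t :=
    hanti ht ⟨ht0pos.le, le_refl _⟩ ht.2
  rw [hht0] at h2
  rw [h0] at h1
  exact ⟨h2, h1⟩
end

section
/- The function g satisfies g(0) = 0, g is differentiable on [0, r₁) with g'(r) = (σ e²/4)·ℓ'(H(r)/(2H(r₁)))·h(r) for all r ∈ [0, r₁), and the (right) derivative at 0 equals σ: g'(0) = σ. -/
/-- `H(r) = (√(k+θ²)/k) cos(arcsin(√(k/(k+θ²))) - √k · min(r, r₁)) - θ/k`. -/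
noncomputable def Hfun (k θ r₁ : ℝ) (r : ℝ) : ℝ :=
  (Real.sqrt (k + θ^2) / k) *
    Real.cos (Real.arcsin (Real.sqrt (k / (k + θ^2))) - Real.sqrt k * min r r₁) - θ / k

/-- `g(r) = (σ e²/2) ℓ(H(r)/(2H(r₁))) H(r₁)`, i.e. the function `log φ` of the paper. -/
noncomputable def gfun (k θ r₁ σ : ℝ) (r : ℝ) : ℝ :=
  (σ * Real.exp 2 / 2) * ell (Hfun k θ r₁ r / (2 * Hfun k θ r₁ r₁)) * Hfun k θ r₁ r₁

noncomputable def ellS : ℝ → ℝ := fun r => Real.exp (-2) - Real.exp (-2 / (1 - 2*r))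

lemma hasDerivAt_ell {r : ℝ} (h : r < 1/2) :
    HasDerivAt ell (Real.exp (-2/(1-2*r)) * (4/(1-2*r)^2)) r := by
  have h2 : (1 - 2*r) ≠ 0 := by nlinarith
  have h1 : HasDerivAt (fun y : ℝ => 1 - 2*y) (-2) r := by
    simpa using ((hasDerivAt_id r).const_mul (2:ℝ)).const_sub 1
  have h3 : HasDerivAt (fun y : ℝ => -2 / (1 - 2*y)) (-(4/(1-2*r)^2)) r := by
    have h3' := (h1.inv h2).const_mul (-2 : ℝ)
    simp only [div_eq_mul_inv]
    refine h3'.congr_deriv ?_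
    ring
  have h4 : HasDerivAt ellS (Real.exp (-2/(1-2*r)) * (4/(1-2*r)^2)) r := by
    have h5 := (hasDerivAt_const r (Real.exp (-2))).sub h3.exp
    refine h5.congr_deriv ?_
    ring
  refine h4.congr_of_eventuallyEq ?_
  filter_upwards [Iio_mem_nhds h] with y hy
  have hy' : y < 1/2 := hy
  simp [ell, ellS, hy']
  intro hc; linarith


/-- `g(0) = 0`; `g` is differentiable on `[0, r₁)` with
`g'(r) = (σe²/4) ℓ'(H(r)/(2H(r₁))) h(r)` there; and `g'(0) = σ`. -/
theorem gfun_deriv (k θ r₁ σ : ℝ) (hk : 0 < k) (hθ : 0 ≤ θ)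
    (hr₁ : 0 < r₁) (hr₁' : r₁ ≤ t0 k θ) (hσ : 0 ≤ σ) :
    gfun k θ r₁ σ 0 = 0 ∧
    (∀ r ∈ Set.Ico (0:ℝ) r₁, HasDerivAt (gfun k θ r₁ σ)
      ((σ * Real.exp 2 / 4) * deriv ell (Hfun k θ r₁ r / (2 * Hfun k θ r₁ r₁))
        * hfun k θ r) r) ∧
    deriv (gfun k θ r₁ σ) 0 = σ := by
  have hK : (0:ℝ) < k + θ^2 := by positivity
  have hsk : 0 < Real.sqrt k := Real.sqrt_pos.mpr hk
  have hsK : 0 < Real.sqrt (k + θ^2) := Real.sqrt_pos.mpr hK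
  have hkk : Real.sqrt k * Real.sqrt k = k := Real.mul_self_sqrt hk.le
  have hKK : Real.sqrt (k+θ^2) * Real.sqrt (k+θ^2) = k + θ^2 := Real.mul_self_sqrt hK.le
  set α : ℝ := Real.arcsin (Real.sqrt (k / (k + θ^2))) with hαdef
  have hkK : Real.sqrt (k / (k+θ^2)) = Real.sqrt k / Real.sqrt (k+θ^2) :=
    Real.sqrt_div hk.le _
  have hle1 : Real.sqrt (k / (k+θ^2)) ≤ 1 := by
    rw [hkK, div_le_one hsK]
    exact Real.sqrt_le_sqrt (by nlinarith)
  have hge : (-1:ℝ) ≤ Real.sqrt (k / (k+θ^2)) :=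
    le_trans (by norm_num) (Real.sqrt_nonneg _)
  have hsin : Real.sin α = Real.sqrt k / Real.sqrt (k+θ^2) := by
    rw [hαdef, Real.sin_arcsin hge hle1, hkK]
  have hcos : Real.cos α = θ / Real.sqrt (k+θ^2) := by
    rw [hαdef, Real.cos_arcsin]
    rw [Real.sq_sqrt (by positivity)]
    have h1 : 1 - k/(k+θ^2) = θ^2/(k+θ^2) := by field_simp; ring
    rw [h1, Real.sqrt_div (sq_nonneg θ), Real.sqrt_sq hθ]
  have hα_le : α ≤ Real.pi / 2 := Real.arcsin_le_pi_div_two _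
  obtain ⟨Hs, hHsdef⟩ : ∃ f : ℝ → ℝ, f = fun r =>
      (Real.sqrt (k + θ^2) / k) * Real.cos (α - Real.sqrt k * r) - θ / k := ⟨_, rfl⟩
  have hHs_eq : ∀ r ≤ r₁, Hfun k θ r₁ r = Hs r := by
    intro r hr
    simp [Hfun, hHsdef, min_eq_left hr]
    exact Or.inl rfl
  -- the trig identity
  have hfun_eq : ∀ r, hfun k θ r
      = Real.sqrt (k+θ^2) * Real.sqrt k / k * Real.sin (α - Real.sqrt k * r) := by
    intro r
    rw [hfun, Real.sin_sub, hsin, hcos]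
    field_simp
    linear_combination (θ * Real.sin (Real.sqrt k * r) -
      Real.sqrt k * Real.cos (Real.sqrt k * r)) * hkk
  have hHsD : ∀ r, HasDerivAt Hs (hfun k θ r) r := by
    intro r
    have h1 : HasDerivAt (fun y : ℝ => α - Real.sqrt k * y) (-Real.sqrt k) r := by
      simpa using ((hasDerivAt_id r).const_mul (Real.sqrt k)).const_sub α
    have h3 := (h1.cos.const_mul (Real.sqrt (k+θ^2) / k)).sub_const (θ/k)
    rw [hHsdef]
    refine h3.congr_deriv ?_
    rw [hfun_eq r]
    field_simp
  -- positivity of hfun on [0, r₁)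
  have hfun_pos : ∀ r, 0 ≤ r → r < r₁ → 0 < hfun k θ r := by
    intro r hr0 hrlt
    rw [hfun_eq r]
    have hrt : r < t0 k θ := lt_of_lt_of_le hrlt hr₁'
    have h1 : Real.sqrt k * r < α := by
      have h1' := (mul_lt_mul_iff_right₀ hsk).mpr hrt
      rw [t0] at h1'
      calc Real.sqrt k * r < Real.sqrt k * ((1/Real.sqrt k) * α) := h1'
        _ = α := by field_simp
    have h2 : 0 < α - Real.sqrt k * r := by
      have : 0 ≤ Real.sqrt k * r := by positivity
      linarith
    have h3 : α - Real.sqrt k * r < Real.pi := by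
      have h3a : 0 ≤ Real.sqrt k * r := by positivity
      have hpi : Real.pi / 2 < Real.pi := by linarith [Real.pi_pos]
      linarith
    have := Real.sin_pos_of_pos_of_lt_pi h2 h3
    positivity
  -- strict monotonicity of Hs on [0, r₁]
  have hmono : StrictMonoOn Hs (Set.Icc 0 r₁) := by
    apply strictMonoOn_of_deriv_pos (convex_Icc 0 r₁)
    · apply Continuous.continuousOn
      rw [hHsdef]; fun_prop
    · intro x hx
      rw [interior_Icc] at hx
      rw [(hHsD x).deriv]
      exact hfun_pos x hx.1.le hx.2
  have hHs0 : Hs 0 = 0 := by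
    rw [hHsdef]
    simp only [mul_zero, sub_zero]
    rw [hcos]
    field_simp
    ring
  have hHR : 0 < Hs r₁ := by
    rw [← hHs0]
    exact hmono ⟨le_refl 0, hr₁.le⟩ ⟨hr₁.le, le_refl r₁⟩ hr₁
  have hHReq : Hfun k θ r₁ r₁ = Hs r₁ := hHs_eq r₁ le_rfl
  have hHRne : Hfun k θ r₁ r₁ ≠ 0 := by rw [hHReq]; exact ne_of_gt hHR
  have algebra : ∀ (D h M : ℝ), M ≠ 0 →
      σ * Real.exp 2 / 4 * D * h = σ * Real.exp 2 / 2 * (D * (h / (2 * M))) * M := by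
    intro D h M hM
    field_simp
    ring
  -- the main derivative claim
  have key : ∀ r ∈ Set.Ico (0:ℝ) r₁, HasDerivAt (gfun k θ r₁ σ)
      ((σ * Real.exp 2 / 4) * deriv ell (Hfun k θ r₁ r / (2 * Hfun k θ r₁ r₁))
        * hfun k θ r) r := by
    intro r hr
    have hHr_eq : Hfun k θ r₁ r = Hs r := hHs_eq r hr.2.le
    have hHr_lt : Hs r < Hs r₁ :=
      hmono ⟨hr.1, hr.2.le⟩ ⟨hr₁.le, le_refl r₁⟩ hr.2
    set x : ℝ := Hfun k θ r₁ r / (2 * Hfun k θ r₁ r₁) with hxdef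
    have hxlt : x < 1/2 := by
      rw [hxdef, hHr_eq, hHReq, div_lt_iff₀ (by linarith : (0:ℝ) < 2 * Hs r₁)]
      have e : 1/2 * (2 * Hs r₁) = Hs r₁ := by ring
      rw [e]
      exact hHr_lt
    have hH : HasDerivAt (Hfun k θ r₁) (hfun k θ r) r := by
      refine (hHsD r).congr_of_eventuallyEq ?_
      filter_upwards [Iio_mem_nhds hr.2] with y hy
      exact hHs_eq y (le_of_lt hy)
    have hellD := hasDerivAt_ell hxlt
    have hcomp := hellD.comp r (hH.div_const (2 * Hfun k θ r₁ r₁))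
    have hfinal := (hcomp.const_mul (σ * Real.exp 2 / 2)).mul_const (Hfun k θ r₁ r₁)
    have hval : (σ * Real.exp 2 / 4) * deriv ell x * hfun k θ r
        = σ * Real.exp 2 / 2 *
          (Real.exp (-2/(1-2*x)) * (4/(1-2*x)^2) * (hfun k θ r / (2 * Hfun k θ r₁ r₁)))
          * Hfun k θ r₁ r₁ := by
      rw [hellD.deriv]
      exact algebra _ _ _ hHRne
    rw [hval]
    exact hfinal.congr_of_eventuallyEq (Filter.Eventually.of_forall fun y => by
      simp [gfun, Function.comp])
  have hH0 : Hfun k θ r₁ 0 = 0 := by rw [hHs_eq 0 hr₁.le, hHs0]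
  refine ⟨?_, key, ?_⟩
  · rw [gfun, hH0]
    have : ell (0 / (2 * Hfun k θ r₁ r₁)) = 0 := by
      norm_num [ell]
    rw [this, mul_zero, zero_mul]
  · have h0 := (key 0 ⟨le_rfl, hr₁⟩).deriv
    rw [h0, hH0]
    have harg : (0:ℝ) / (2 * Hfun k θ r₁ r₁) = 0 := by simp
    rw [harg]
    have hd0 : deriv ell 0 = 4 * Real.exp (-2) := by
      have hder := (hasDerivAt_ell (by norm_num : (0:ℝ) < 1/2)).deriv
      rw [hder]; norm_num [mul_comm]
    have hh0 : hfun k θ 0 = 1 := by simp [hfun]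
    rw [hd0, hh0]
    rw [show (-2:ℝ) = -(2:ℝ) by norm_num, Real.exp_neg]
    field_simp
end

section
/- For all r ≥ 0 the function g satisfies 0 ≤ g(r) ≤ (σ/2)·H(r₁), g is constant on [r₁, ∞), and its derivative satisfies 0 ≤ g'(r) ≤ σ wherever it exists (in particular for all r ∈ [0, r₁) and all r > r₁). -/
/-! ### Auxiliary lemmas -/

lemma ell_le (x : ℝ) : ell x ≤ Real.exp (-2) := by
  unfold ell
  split
  · have := Real.exp_pos (-2 / (1 - 2*x)); linarith
  · exact le_refl _

lemma ell_nonneg {x : ℝ} (hx : 0 ≤ x) : 0 ≤ ell x := by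
  unfold ell
  split
  · rename_i h
    have h1 : 0 < 1 - 2*x := by linarith
    have h2 : -2 / (1 - 2*x) ≤ -2 := by
      rw [div_le_iff₀ h1]; nlinarith
    have := Real.exp_le_exp.mpr h2
    linarith
  · positivity

lemma ell_hasDeriv {x : ℝ} (hx : x < 1/2) :
    HasDerivAt ell (4 * Real.exp (-2 / (1 - 2*x)) / (1 - 2*x)^2) x := by
  have h1 : 0 < 1 - 2*x := by linarith
  have hinner : HasDerivAt (fun y : ℝ => (1 - 2*y)) (-2) x := by
    simpa [Pi.sub_def] using (hasDerivAt_const x (1:ℝ)).sub ((hasDerivAt_id x).const_mul 2)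
  have hinv : HasDerivAt (fun y : ℝ => -2 / (1 - 2*y))
      ((0 * (1 - 2*x) - (-2) * (-2)) / (1 - 2*x)^2) x :=
    (hasDerivAt_const x (-2:ℝ)).div hinner (by positivity)
  have hexp := hinv.exp
  have hf : HasDerivAt (fun y : ℝ => Real.exp (-2) - Real.exp (-2 / (1 - 2*y)))
      (4 * Real.exp (-2 / (1 - 2*x)) / (1 - 2*x)^2) x := by
    have := (hasDerivAt_const x (Real.exp (-2))).sub hexp
    exact this.congr_deriv (by ring)
  apply hf.congr_of_eventuallyEq
  filter_upwards [Iio_mem_nhds hx] with y hy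
  simp only [Set.mem_Iio] at hy
  simp only [ell, if_pos hy]

lemma key_exp {s : ℝ} (hs : 0 < s) : Real.exp 2 * Real.exp (-2/s) ≤ s^2 := by
  have h1 : 1/s ≤ Real.exp (1/s - 1) := by
    have := Real.add_one_le_exp (1/s - 1); linarith
  have h2 : Real.exp (1 - 1/s) ≤ s := by
    rw [show (1:ℝ) - 1/s = -(1/s - 1) by ring, Real.exp_neg]
    calc (Real.exp (1/s - 1))⁻¹ ≤ (1/s)⁻¹ := by
          apply inv_anti₀ (by positivity) h1
      _ = s := by rw [one_div, inv_inv]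
  have h3 : Real.exp 2 * Real.exp (-2/s) = Real.exp (1 - 1/s) * Real.exp (1 - 1/s) := by
    rw [← Real.exp_add, ← Real.exp_add]
    congr 1
    field_simp; ring
  rw [h3, sq]
  exact mul_le_mul h2 h2 (Real.exp_pos _).le hs.le

section
variable {k θ r₁ : ℝ} (hk : 0 < k) (hθ : 0 ≤ θ) (hr₁ : 0 < r₁)
  (hsr : Real.sqrt k * r₁ ≤ Real.arcsin (Real.sqrt (k/(k+θ^2))))

set_option linter.unusedSectionVars false

lemma cos_aa (hk : 0 < k) (hθ : 0 ≤ θ) :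
    Real.cos (Real.arcsin (Real.sqrt (k/(k+θ^2)))) = θ / Real.sqrt (k+θ^2) := by
  have h2 : (0:ℝ) < k + θ^2 := by positivity
  rw [Real.cos_arcsin, Real.sq_sqrt (by positivity : (0:ℝ) ≤ k/(k+θ^2))]
  have : 1 - k/(k+θ^2) = θ^2/(k+θ^2) := by field_simp; ring
  rw [this, Real.sqrt_div (by positivity), Real.sqrt_sq hθ]

lemma aa_le_pi : Real.arcsin (Real.sqrt (k/(k+θ^2))) ≤ Real.pi := by
  have := Real.arcsin_le_pi_div_two (Real.sqrt (k/(k+θ^2)))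
  have := Real.pi_pos
  linarith

include hk hθ hr₁ hsr

lemma H_nonneg {r : ℝ} (hr : 0 ≤ r) : 0 ≤ Hfun k θ r₁ r := by
  set a := Real.arcsin (Real.sqrt (k/(k+θ^2))) with ha
  set m := min r r₁ with hm
  have hm0 : 0 ≤ m := le_min hr hr₁.le
  have hm1 : m ≤ r₁ := min_le_right _ _
  have hsk : 0 ≤ Real.sqrt k := Real.sqrt_nonneg k
  have hskm : Real.sqrt k * m ≤ a :=
    le_trans (mul_le_mul_of_nonneg_left hm1 hsk) hsr
  have hφ0 : 0 ≤ a - Real.sqrt k * m := by linarith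
  have hφa : a - Real.sqrt k * m ≤ a := by
    have : 0 ≤ Real.sqrt k * m := mul_nonneg hsk hm0
    linarith
  have hcos : Real.cos a ≤ Real.cos (a - Real.sqrt k * m) :=
    Real.cos_le_cos_of_nonneg_of_le_pi hφ0 (aa_le_pi (k := k) (θ := θ)) hφa
  have hA : 0 < Real.sqrt (k + θ^2) / k := by positivity
  have hkey : (Real.sqrt (k + θ^2) / k) * Real.cos a = θ / k := by
    rw [ha, cos_aa hk hθ]
    have h2 : Real.sqrt (k + θ^2) ≠ 0 := by positivity
    field_simp
  have := mul_le_mul_of_nonneg_left hcos hA.le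
  unfold Hfun
  rw [← ha, ← hm]
  linarith [hkey ▸ this]

lemma H_lt {r : ℝ} (hr : 0 ≤ r) (hrr : r < r₁) : Hfun k θ r₁ r < Hfun k θ r₁ r₁ := by
  set a := Real.arcsin (Real.sqrt (k/(k+θ^2))) with ha
  have hsk : 0 < Real.sqrt k := Real.sqrt_pos.mpr hk
  have h1 : Real.sqrt k * r < Real.sqrt k * r₁ := mul_lt_mul_of_pos_left hrr hsk
  have h0r : 0 ≤ Real.sqrt k * r := mul_nonneg hsk.le hr
  have hcos : Real.cos (a - Real.sqrt k * r) < Real.cos (a - Real.sqrt k * r₁) := by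
    apply Real.cos_lt_cos_of_nonneg_of_le_pi
    · linarith
    · have := aa_le_pi (k := k) (θ := θ); linarith
    · linarith
  have hA : 0 < Real.sqrt (k + θ^2) / k := by positivity
  unfold Hfun
  rw [min_eq_left hrr.le, min_self, ← ha]
  have := mul_lt_mul_of_pos_left hcos hA
  linarith

lemma H1_pos : 0 < Hfun k θ r₁ r₁ :=
  lt_of_le_of_lt (H_nonneg hk hθ hr₁ hsr le_rfl) (H_lt hk hθ hr₁ hsr le_rfl hr₁)

lemma H_hasDeriv {r : ℝ} (hrr : r < r₁) :
    HasDerivAt (Hfun k θ r₁)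
      (Real.sqrt k * (Real.sqrt (k + θ^2) / k) *
        Real.sin (Real.arcsin (Real.sqrt (k/(k+θ^2))) - Real.sqrt k * r)) r := by
  set a := Real.arcsin (Real.sqrt (k/(k+θ^2))) with ha
  have hinner : HasDerivAt (fun x : ℝ => a - Real.sqrt k * x) (-Real.sqrt k) r := by
    simpa [Pi.sub_def] using (hasDerivAt_const r a).sub ((hasDerivAt_id r).const_mul (Real.sqrt k))
  have hcos := hinner.cos
  have hf : HasDerivAt (fun x : ℝ =>
      (Real.sqrt (k + θ^2) / k) * Real.cos (a - Real.sqrt k * x) - θ / k)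
      (Real.sqrt k * (Real.sqrt (k + θ^2) / k) * Real.sin (a - Real.sqrt k * r)) r := by
    have := (hcos.const_mul (Real.sqrt (k + θ^2) / k)).sub_const (θ / k)
    exact this.congr_deriv (by ring)
  apply hf.congr_of_eventuallyEq
  filter_upwards [Iio_mem_nhds hrr] with y hy
  simp only [Set.mem_Iio] at hy
  unfold Hfun
  rw [min_eq_left hy.le, ← ha]

lemma D_nonneg {r : ℝ} (hr : 0 ≤ r) (hrr : r < r₁) :
    0 ≤ Real.sqrt k * (Real.sqrt (k + θ^2) / k) *
      Real.sin (Real.arcsin (Real.sqrt (k/(k+θ^2))) - Real.sqrt k * r) := by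
  set a := Real.arcsin (Real.sqrt (k/(k+θ^2))) with ha
  have hsk : 0 < Real.sqrt k := Real.sqrt_pos.mpr hk
  have h1 : Real.sqrt k * r ≤ a :=
    le_trans (mul_le_mul_of_nonneg_left hrr.le hsk.le) hsr
  have hsin : 0 ≤ Real.sin (a - Real.sqrt k * r) := by
    apply Real.sin_nonneg_of_nonneg_of_le_pi
    · linarith
    · have h2 : 0 ≤ Real.sqrt k * r := mul_nonneg hsk.le hr
      have h3 := aa_le_pi (k := k) (θ := θ)
      linarith
  positivity

lemma D_le_one {r : ℝ} (hr : 0 ≤ r) (hrr : r < r₁) :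
    Real.sqrt k * (Real.sqrt (k + θ^2) / k) *
      Real.sin (Real.arcsin (Real.sqrt (k/(k+θ^2))) - Real.sqrt k * r) ≤ 1 := by
  set a := Real.arcsin (Real.sqrt (k/(k+θ^2))) with ha
  set φ := a - Real.sqrt k * r with hφ
  set c := Real.cos φ with hc
  set s := Real.sin φ with hs
  have hH : 0 ≤ Hfun k θ r₁ r := H_nonneg hk hθ hr₁ hsr hr
  have hHr : Hfun k θ r₁ r = (Real.sqrt (k + θ^2) / k) * c - θ / k := by
    unfold Hfun; rw [min_eq_left hrr.le, ← ha, ← hc]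
  have hs0 : 0 ≤ s := by
    have h4 := D_nonneg hk hθ hr₁ hsr hr hrr
    rw [← ha, ← hφ, ← hs] at h4
    have hsk : 0 < Real.sqrt k := Real.sqrt_pos.mpr hk
    have hA : 0 < Real.sqrt k * (Real.sqrt (k + θ^2) / k) := by positivity
    nlinarith
  have q1 : (Real.sqrt (k + θ^2))^2 = k + θ^2 := Real.sq_sqrt (by positivity)
  have q2 : (Real.sqrt k)^2 = k := Real.sq_sqrt hk.le
  have pyth : s^2 + c^2 = 1 := by rw [hs, hc]; exact Real.sin_sq_add_cos_sq φ
  have hHc : θ ≤ Real.sqrt (k + θ^2) * c := by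
    rw [hHr] at hH
    have := mul_le_mul_of_nonneg_left hH hk.le
    rw [mul_sub] at this
    field_simp at this
    linarith
  have h1 : θ^2 ≤ (k + θ^2) * c^2 := by nlinarith
  have h2 : (k + θ^2) * s^2 ≤ k := by nlinarith
  set X := Real.sqrt k * Real.sqrt (k + θ^2) * s with hX
  have hX0 : 0 ≤ X := by positivity
  have hX2 : X^2 ≤ k^2 := by
    have e1 : X^2 = (Real.sqrt k)^2 * (Real.sqrt (k + θ^2))^2 * s^2 := by rw [hX]; ring
    have : X^2 = k * ((k + θ^2) * s^2) := by rw [e1, q1, q2]; ring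
    nlinarith
  have hXk : X ≤ k := by nlinarith
  calc Real.sqrt k * (Real.sqrt (k + θ^2) / k) * s = X / k := by rw [hX]; ring
    _ ≤ 1 := by rw [div_le_one hk]; exact hXk

omit hk hθ hr₁ hsr in
lemma H_eq_of_ge {r : ℝ} (hr : r₁ ≤ r) : Hfun k θ r₁ r = Hfun k θ r₁ r₁ := by
  unfold Hfun; rw [min_eq_right hr, min_self]

end

/-- For all `r ≥ 0`, `0 ≤ g(r) ≤ (σ/2) H(r₁)`; `g` is constant on `[r₁, ∞)`; and
`0 ≤ g'(r) ≤ σ` wherever the derivative exists, in particular on `[0, r₁)` and `(r₁, ∞)`. -/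
theorem gfun_bounds (k θ r₁ σ : ℝ) (hk : 0 < k) (hθ : 0 ≤ θ)
    (hr₁ : 0 < r₁) (hr₁' : r₁ ≤ t0 k θ) (hσ : 0 ≤ σ) :
    (∀ r : ℝ, 0 ≤ r → 0 ≤ gfun k θ r₁ σ r ∧ gfun k θ r₁ σ r ≤ σ/2 * Hfun k θ r₁ r₁) ∧
    (∀ r ∈ Set.Ici r₁, gfun k θ r₁ σ r = gfun k θ r₁ σ r₁) ∧
    (∀ r : ℝ, r ∈ Set.Ico (0:ℝ) r₁ ∨ r ∈ Set.Ioi r₁ →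
      0 ≤ deriv (gfun k θ r₁ σ) r ∧ deriv (gfun k θ r₁ σ) r ≤ σ) := by
  have hsk : 0 < Real.sqrt k := Real.sqrt_pos.mpr hk
  have hsr : Real.sqrt k * r₁ ≤ Real.arcsin (Real.sqrt (k/(k+θ^2))) := by
    have h := mul_le_mul_of_nonneg_left hr₁' hsk.le
    unfold t0 at h
    calc Real.sqrt k * r₁
        ≤ Real.sqrt k * ((1 / Real.sqrt k) * Real.arcsin (Real.sqrt (k / (k + θ^2)))) := h
      _ = Real.arcsin (Real.sqrt (k/(k+θ^2))) := by field_simp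
  have hH1 : 0 < Hfun k θ r₁ r₁ := H1_pos hk hθ hr₁ hsr
  have hC : 0 ≤ σ * Real.exp 2 / 2 := by
    have := (Real.exp_pos 2).le; positivity
  have hexp2 : Real.exp 2 * Real.exp (-2) = 1 := by
    rw [← Real.exp_add]; norm_num
  have hg_const : ∀ r ∈ Set.Ici r₁, gfun k θ r₁ σ r = gfun k θ r₁ σ r₁ := by
    intro r hr
    unfold gfun
    rw [H_eq_of_ge hr]
  refine ⟨?_, hg_const, ?_⟩
  · intro r hr
    have hH := H_nonneg hk hθ hr₁ hsr hr
    have hu0 : 0 ≤ Hfun k θ r₁ r / (2 * Hfun k θ r₁ r₁) := by positivity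
    constructor
    · unfold gfun
      exact mul_nonneg (mul_nonneg hC (ell_nonneg hu0)) hH1.le
    · unfold gfun
      have h1 := mul_le_mul_of_nonneg_right
        (mul_le_mul_of_nonneg_left (ell_le (Hfun k θ r₁ r / (2 * Hfun k θ r₁ r₁))) hC) hH1.le
      have h2 : σ * Real.exp 2 / 2 * Real.exp (-2) * Hfun k θ r₁ r₁
          = σ/2 * Hfun k θ r₁ r₁ := by
        have : σ * Real.exp 2 / 2 * Real.exp (-2) = σ * (Real.exp 2 * Real.exp (-2)) / 2 := by
          ring
        rw [this, hexp2, mul_one]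
      linarith [h2 ▸ h1]
  · intro r hcase
    rcases hcase with ⟨hr0, hrr⟩ | hr
    · -- r ∈ [0, r₁)
      have hH := H_nonneg hk hθ hr₁ hsr hr0
      have hHlt := H_lt hk hθ hr₁ hsr hr0 hrr
      have hD0 := D_nonneg hk hθ hr₁ hsr hr0 hrr
      have hD1 := D_le_one hk hθ hr₁ hsr hr0 hrr
      have hDH := H_hasDeriv hk hθ hr₁ hsr hrr
      set D := Real.sqrt k * (Real.sqrt (k + θ^2) / k) *
        Real.sin (Real.arcsin (Real.sqrt (k/(k+θ^2))) - Real.sqrt k * r) with hDdef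
      set u := Hfun k θ r₁ r / (2 * Hfun k θ r₁ r₁) with hudef
      have hu0 : 0 ≤ u := by positivity
      have hu2 : u < 1/2 := by
        rw [hudef, div_lt_iff₀ (by positivity)]; linarith
      have hs0 : 0 < 1 - 2*u := by linarith
      have hsne : (1 - 2*u) ≠ 0 := ne_of_gt hs0
      have hH1ne : Hfun k θ r₁ r₁ ≠ 0 := ne_of_gt hH1
      have hd1 : HasDerivAt (fun x => Hfun k θ r₁ x / (2 * Hfun k θ r₁ r₁))
          (D / (2 * Hfun k θ r₁ r₁)) r := hDH.div_const _
      have hd2 := ell_hasDeriv hu2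
      have hd3 : HasDerivAt (fun x => ell (Hfun k θ r₁ x / (2 * Hfun k θ r₁ r₁)))
          ((4 * Real.exp (-2/(1 - 2*u)) / (1 - 2*u)^2) * (D / (2 * Hfun k θ r₁ r₁))) r :=
        by have := HasDerivAt.comp r hd2 hd1; exact this
      have hd4 : HasDerivAt (gfun k θ r₁ σ)
          ((σ * Real.exp 2 / 2) *
            ((4 * Real.exp (-2/(1 - 2*u)) / (1 - 2*u)^2) * (D / (2 * Hfun k θ r₁ r₁))) *
            (Hfun k θ r₁ r₁)) r :=
        (hd3.const_mul _).mul_const _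
      rw [hd4.deriv]
      have hVeq : (σ * Real.exp 2 / 2) *
          ((4 * Real.exp (-2/(1 - 2*u)) / (1 - 2*u)^2) * (D / (2 * Hfun k θ r₁ r₁))) *
          (Hfun k θ r₁ r₁)
          = σ * ((Real.exp 2 * Real.exp (-2/(1 - 2*u))) / (1 - 2*u)^2) * D := by
        field_simp
        ring
      rw [hVeq]
      have hq0 : 0 ≤ (Real.exp 2 * Real.exp (-2/(1 - 2*u))) / (1 - 2*u)^2 := by positivity
      have hq1 : (Real.exp 2 * Real.exp (-2/(1 - 2*u))) / (1 - 2*u)^2 ≤ 1 := by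
        rw [div_le_one (by positivity)]
        exact key_exp hs0
      constructor
      · exact mul_nonneg (mul_nonneg hσ hq0) hD0
      · nlinarith [mul_nonneg hσ hq0, mul_nonneg (mul_nonneg hσ hq0) hD0]
    · -- r > r₁
      have hev : gfun k θ r₁ σ =ᶠ[nhds r] (fun _ => gfun k θ r₁ σ r₁) := by
        filter_upwards [Ioi_mem_nhds hr] with y hy
        exact hg_const y (Set.mem_Ici.mpr (le_of_lt (Set.mem_Ioi.mp hy)))
      rw [hev.deriv_eq, deriv_const]
      exact ⟨le_rfl, hσ⟩
end

section
/- For every r ∈ [0, r₁), every real d ≥ 1 and every z ≥ 0, the following inequality holds: (σ e²/4)·[ ℓ'(H(r)/(2H(r₁)))·(d·h'(r) − z) + ℓ''(H(r)/(2H(r₁)))·h(r)²/(2H(r₁)) ] ≥ −σ·( d·√(θ²+k) + z + 5/(2H(r₁)) ). -/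
/-! ### Auxiliary facts about `ell` and its derivatives -/

/-- Explicit formula for the first derivative of `ell` on `(-∞, 1/2)`. -/
noncomputable def ellD (x : ℝ) : ℝ :=
  4 * ((1 - 2*x)⁻¹)^2 * Real.exp (-2 * (1 - 2*x)⁻¹)

/-- Explicit formula for the second derivative of `ell` on `(-∞, 1/2)`. -/
noncomputable def ellD2 (x : ℝ) : ℝ :=
  (16 * ((1 - 2*x)⁻¹)^3 - 16 * ((1 - 2*x)⁻¹)^4) * Real.exp (-2 * (1 - 2*x)⁻¹)

lemma lin_hasDeriv (x : ℝ) : HasDerivAt (fun y : ℝ => 1 - 2*y) (-2) x := by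
  simpa using ((hasDerivAt_id x).const_mul (2:ℝ)).const_sub 1

lemma inv_hasDeriv {x : ℝ} (hx : x < 1/2) :
    HasDerivAt (fun y : ℝ => (1 - 2*y)⁻¹) (2 * ((1 - 2*x)⁻¹)^2) x := by
  have h0 : (1 - 2*x) ≠ 0 := by nlinarith
  have := (lin_hasDeriv x).inv h0
  refine this.congr_deriv ?_
  rw [inv_pow]; ring

lemma exp_part_hasDeriv {x : ℝ} (hx : x < 1/2) :
    HasDerivAt (fun y : ℝ => Real.exp (-2 * (1 - 2*y)⁻¹))
      (Real.exp (-2 * (1 - 2*x)⁻¹) * (-4 * ((1 - 2*x)⁻¹)^2)) x := by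
  have := ((inv_hasDeriv hx).const_mul (-2)).exp
  convert this using 1
  ring

lemma ell_eventually {x : ℝ} (hx : x < 1/2) :
    ell =ᶠ[nhds x] (fun y : ℝ => Real.exp (-2) - Real.exp (-2 * (1 - 2*y)⁻¹)) := by
  filter_upwards [Iio_mem_nhds hx] with y hy
  show ell y = _
  unfold ell
  rw [if_pos (show y < 1/2 from hy), div_eq_mul_inv]

lemma ell_hasDeriv_s11 {x : ℝ} (hx : x < 1/2) : HasDerivAt ell (ellD x) x := by
  have hg : HasDerivAt (fun y : ℝ => Real.exp (-2) - Real.exp (-2 * (1 - 2*y)⁻¹))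
      (ellD x) x := by
    have := (exp_part_hasDeriv hx).const_sub (Real.exp (-2))
    refine this.congr_deriv ?_
    unfold ellD; ring
  exact hg.congr_of_eventuallyEq (ell_eventually hx)

lemma ell_deriv {x : ℝ} (hx : x < 1/2) : deriv ell x = ellD x := (ell_hasDeriv_s11 hx).deriv

lemma ellD_hasDeriv {x : ℝ} (hx : x < 1/2) : HasDerivAt ellD (ellD2 x) x := by
  have h1 : HasDerivAt (fun y : ℝ => 4 * ((1 - 2*y)⁻¹)^2)
      (4 * (2 * ((1 - 2*x)⁻¹)^1 * (2 * ((1 - 2*x)⁻¹)^2))) x := by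
    simpa using ((inv_hasDeriv hx).pow 2).const_mul (4:ℝ)
  have h2 := h1.mul (exp_part_hasDeriv hx)
  refine h2.congr_deriv ?_
  unfold ellD2; ring

lemma ell_deriv2 {x : ℝ} (hx : x < 1/2) : deriv (deriv ell) x = ellD2 x := by
  have hev : deriv ell =ᶠ[nhds x] ellD := by
    filter_upwards [Iio_mem_nhds hx] with y hy
    exact ell_deriv hy
  rw [Filter.EventuallyEq.deriv_eq hev]
  exact (ellD_hasDeriv hx).deriv

/-! ### Quantitative bounds on the derivatives -/

lemma s_ge_one {x : ℝ} (hx0 : 0 ≤ x) (hx : x < 1/2) : 1 ≤ (1 - 2*x)⁻¹ := by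
  rw [le_inv_comm₀] <;> nlinarith

lemma ellD_nonneg {x : ℝ} : 0 ≤ ellD x := by unfold ellD; positivity

lemma taylor6 (t : ℝ) (ht : 0 ≤ t) :
    1 + t + t^2/2 + t^3/6 + t^4/24 + t^5/120 + t^6/720 ≤ Real.exp t := by
  have := Real.sum_le_exp_of_nonneg ht 7
  simp [Finset.sum_range_succ, Nat.factorial] at this
  linarith [this]

lemma poly_bound (t : ℝ) (ht : 0 ≤ t) :
    (1 + t/2)^4 - (1 + t/2)^3 ≤
      5/4 * (1 + t + t^2/2 + t^3/6 + t^4/24 + t^5/120 + t^6/720) := by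
  nlinarith [sq_nonneg (2*t^3 + 6*t^2 - 15*t - 51), ht, sq_nonneg t]

lemma ellD_le {x : ℝ} (hx0 : 0 ≤ x) (hx : x < 1/2) : Real.exp 2 * ellD x ≤ 4 := by
  set s := (1 - 2*x)⁻¹ with hs
  have h1 : 1 ≤ s := s_ge_one hx0 hx
  have h2 : s ≤ Real.exp (s - 1) := by
    have := Real.add_one_le_exp (s - 1); linarith
  have h3 : s^2 ≤ Real.exp (s-1) * Real.exp (s-1) := by nlinarith
  have h4 : Real.exp 2 * ellD x =
      s^2 * (Real.exp 2 * Real.exp (-2*s)) * 4 := by unfold ellD; ring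
  have h5 : Real.exp (s-1) * Real.exp (s-1) * (Real.exp 2 * Real.exp (-2*s)) = 1 := by
    rw [← Real.exp_add, ← Real.exp_add, ← Real.exp_add,
      show s - 1 + (s - 1) + (2 + -2*s) = 0 by ring, Real.exp_zero]
  have hpos : 0 < Real.exp 2 * Real.exp (-2*s) := by positivity
  nlinarith [h3, hpos, h5]

lemma ellD2_nonpos {x : ℝ} (hx0 : 0 ≤ x) (hx : x < 1/2) : ellD2 x ≤ 0 := by
  have h1 : 1 ≤ (1 - 2*x)⁻¹ := s_ge_one hx0 hx
  have h2 : (0:ℝ) < Real.exp (-2 * (1 - 2*x)⁻¹) := Real.exp_pos _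
  have h3 : 16 * ((1 - 2*x)⁻¹)^3 - 16 * ((1 - 2*x)⁻¹)^4 ≤ 0 := by
    nlinarith [pow_nonneg (le_trans zero_le_one h1) 3]
  exact mul_nonpos_of_nonpos_of_nonneg h3 h2.le

lemma ellD2_abs_le {x : ℝ} (hx0 : 0 ≤ x) (hx : x < 1/2) :
    Real.exp 2 * (-(ellD2 x)) ≤ 20 := by
  set s := (1 - 2*x)⁻¹ with hs
  have h1 : 1 ≤ s := s_ge_one hx0 hx
  have ht0 : 0 ≤ 2*s - 2 := by linarith
  have hkey : s^4 - s^3 ≤ 5/4 * Real.exp (2*s - 2) := by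
    have h6 := (poly_bound (2*s-2) ht0).trans
      (by nlinarith [taylor6 (2*s-2) ht0] :
        5/4 * (1 + (2*s-2) + (2*s-2)^2/2 + (2*s-2)^3/6
          + (2*s-2)^4/24 + (2*s-2)^5/120 + (2*s-2)^6/720) ≤ 5/4 * Real.exp (2*s-2))
    calc s^4 - s^3 = (1 + (2*s-2)/2)^4 - (1 + (2*s-2)/2)^3 := by ring
    _ ≤ 5/4 * Real.exp (2*s - 2) := h6
  have h5 : Real.exp 2 * Real.exp (-2*s) * Real.exp (2*s-2) = 1 := by
    rw [← Real.exp_add, ← Real.exp_add,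
      show (2:ℝ) + -2*s + (2*s - 2) = 0 by ring, Real.exp_zero]
  have hpos : 0 < Real.exp 2 * Real.exp (-2*s) := by positivity
  have h4 : Real.exp 2 * (-(ellD2 x)) =
      (s^4 - s^3) * (Real.exp 2 * Real.exp (-2*s)) * 16 := by unfold ellD2; ring
  nlinarith [hkey, hpos, h5, Real.exp_pos (2*s-2)]

/-! ### Trigonometric facts -/

lemma sin_alpha {k θ : ℝ} (hk : 0 < k) (hθ : 0 ≤ θ) :
    Real.sin (Real.arcsin (Real.sqrt (k / (k + θ^2)))) =
      Real.sqrt k / Real.sqrt (k + θ^2) := by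
  rw [Real.sqrt_div hk.le, Real.sin_arcsin]
  · have h : (0:ℝ) ≤ Real.sqrt k / Real.sqrt (k + θ^2) := by positivity
    linarith
  · rw [div_le_one (by positivity)]
    exact Real.sqrt_le_sqrt (by nlinarith [sq_nonneg θ])

lemma cos_alpha {k θ : ℝ} (hk : 0 < k) (hθ : 0 ≤ θ) :
    Real.cos (Real.arcsin (Real.sqrt (k / (k + θ^2)))) =
      θ / Real.sqrt (k + θ^2) := by
  have hK2 : (Real.sqrt (k + θ^2))^2 = k + θ^2 := Real.sq_sqrt (by positivity)
  have hk2 : (Real.sqrt k)^2 = k := Real.sq_sqrt hk.le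
  rw [Real.cos_arcsin, Real.sqrt_div hk.le]
  have h9 : 1 - (Real.sqrt k / Real.sqrt (k + θ^2))^2 = (θ / Real.sqrt (k + θ^2))^2 := by
    rw [div_pow, div_pow, hK2, hk2]
    field_simp
    ring
  rw [h9, Real.sqrt_sq (by positivity)]

lemma hfun_id {k θ : ℝ} (hk : 0 < k) (hθ : 0 ≤ θ) (r : ℝ) :
    Real.sqrt k * hfun k θ r =
      Real.sqrt (k + θ^2) *
        Real.sin (Real.arcsin (Real.sqrt (k / (k + θ^2))) - Real.sqrt k * r) := by
  have hsk : 0 < Real.sqrt k := Real.sqrt_pos.2 hk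
  have hK : 0 < Real.sqrt (k + θ^2) := Real.sqrt_pos.2 (by positivity)
  rw [Real.sin_sub, sin_alpha hk hθ, cos_alpha hk hθ]
  unfold hfun
  field_simp

lemma hfun_deriv {k θ : ℝ} (hk : 0 < k) (r : ℝ) :
    deriv (hfun k θ) r =
      -(Real.sqrt k * Real.sin (Real.sqrt k * r)) - θ * Real.cos (Real.sqrt k * r) := by
  have hsk : 0 < Real.sqrt k := Real.sqrt_pos.2 hk
  have hlin : HasDerivAt (fun t : ℝ => Real.sqrt k * t) (Real.sqrt k) r := by
    simpa using (hasDerivAt_id r).const_mul (Real.sqrt k)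
  have h3 : HasDerivAt (hfun k θ)
      (-Real.sin (Real.sqrt k * r) * Real.sqrt k
        - θ / Real.sqrt k * (Real.cos (Real.sqrt k * r) * Real.sqrt k)) r :=
    hlin.cos.sub ((hlin.sin).const_mul (θ / Real.sqrt k))
  rw [h3.deriv]
  field_simp

lemma hfun_deriv_sq {k θ : ℝ} (hk : 0 < k) (r : ℝ) :
    (deriv (hfun k θ) r)^2 ≤ θ^2 + k := by
  rw [hfun_deriv hk r]
  have h1 := Real.sin_sq_add_cos_sq (Real.sqrt k * r)
  have hk2 : (Real.sqrt k)^2 = k := Real.sq_sqrt hk.le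
  nlinarith [sq_nonneg (θ * Real.sin (Real.sqrt k * r)
    - Real.sqrt k * Real.cos (Real.sqrt k * r))]

lemma abs_from_sq {a c : ℝ} (h : a^2 ≤ c) (hc : 0 ≤ c) :
    -Real.sqrt c ≤ a ∧ a ≤ Real.sqrt c := by
  have h1 : (Real.sqrt c)^2 = c := Real.sq_sqrt hc
  have h2 : 0 ≤ Real.sqrt c := Real.sqrt_nonneg c
  constructor
  · nlinarith [sq_nonneg (a + Real.sqrt c)]
  · nlinarith [sq_nonneg (a - Real.sqrt c)]

lemma term1_bound {A w M e : ℝ} (hA : 0 ≤ A) (he : 0 < e) (hAle : e * A ≤ 4)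
    (hM : 0 ≤ M) (hlb : -M ≤ w) : -M ≤ e/4 * (A * w) := by
  nlinarith [mul_nonneg (mul_nonneg he.le hA) (by linarith : 0 ≤ w + M),
    mul_nonneg (by linarith : 0 ≤ 4 - e * A) hM]

lemma term2_bound {B h2 e : ℝ} (he : 0 < e) (hB : B ≤ 0) (hBle : e * (-B) ≤ 20)
    (h20 : 0 ≤ h2) (h21 : h2 ≤ 1) : -20 ≤ e * (B * h2) := by
  nlinarith [mul_nonneg (mul_nonneg he.le (by linarith : 0 ≤ -B)) (by linarith : 0 ≤ 1 - h2)]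

lemma w_lb {d z D Q : ℝ} (hd : 1 ≤ d) (hz : 0 ≤ z) (hlb : -Q ≤ D) :
    -(d * Q + z) ≤ d * D - z := by
  nlinarith [mul_le_mul_of_nonneg_left hlb (by linarith : (0:ℝ) ≤ d)]

set_option maxHeartbeats 1000000 in
/-- For every `r ∈ [0, r₁)`, `d ≥ 1` and `z ≥ 0`:
`(σe²/4)[ℓ'(H(r)/(2H(r₁)))(d h'(r) − z) + ℓ''(H(r)/(2H(r₁))) h(r)²/(2H(r₁))]
  ≥ −σ (d √(θ²+k) + z + 5/(2H(r₁)))`. -/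
theorem key_lower_bound (k θ r₁ σ : ℝ) (hk : 0 < k) (hθ : 0 ≤ θ)
    (hr₁ : 0 < r₁) (hr₁' : r₁ ≤ t0 k θ) (hσ : 0 ≤ σ) :
    ∀ r ∈ Set.Ico (0:ℝ) r₁, ∀ d : ℝ, 1 ≤ d → ∀ z : ℝ, 0 ≤ z →
      (σ * Real.exp 2 / 4) *
        (deriv ell (Hfun k θ r₁ r / (2 * Hfun k θ r₁ r₁))
            * (d * deriv (hfun k θ) r - z)
          + deriv (deriv ell) (Hfun k θ r₁ r / (2 * Hfun k θ r₁ r₁))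
            * (hfun k θ r)^2 / (2 * Hfun k θ r₁ r₁))
      ≥ -σ * (d * Real.sqrt (θ^2 + k) + z + 5 / (2 * Hfun k θ r₁ r₁)) := by
  intro r hr d hd z hz
  obtain ⟨hr0, hrr₁⟩ := hr
  have hsk : 0 < Real.sqrt k := Real.sqrt_pos.2 hk
  have hK : 0 < Real.sqrt (k + θ^2) := Real.sqrt_pos.2 (by positivity)
  set α := Real.arcsin (Real.sqrt (k / (k + θ^2))) with hα
  have hα0 : 0 ≤ α := Real.arcsin_nonneg.2 (by positivity)
  have hα2 : α ≤ Real.pi / 2 := Real.arcsin_le_pi_div_two _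
  have hαpi : α ≤ Real.pi := by linarith [Real.pi_pos]
  -- `√k · r₁ ≤ α`
  have hskr₁ : Real.sqrt k * r₁ ≤ α := by
    have h := mul_le_mul_of_nonneg_left hr₁' hsk.le
    rw [t0, show Real.sqrt k * (1 / Real.sqrt k * Real.arcsin (Real.sqrt (k / (k + θ^2))))
      = Real.arcsin (Real.sqrt (k / (k + θ^2))) by field_simp] at h
    exact h
  have hskr : Real.sqrt k * r < Real.sqrt k * r₁ := by
    exact mul_lt_mul_of_pos_left hrr₁ hsk
  have hskr0 : 0 ≤ Real.sqrt k * r := by positivity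
  -- `H` values
  have Hr_eq : Hfun k θ r₁ r =
      (Real.sqrt (k + θ^2) / k) * Real.cos (α - Real.sqrt k * r) - θ / k := by
    unfold Hfun; rw [min_eq_left hrr₁.le]
  have Hr₁_eq : Hfun k θ r₁ r₁ =
      (Real.sqrt (k + θ^2) / k) * Real.cos (α - Real.sqrt k * r₁) - θ / k := by
    unfold Hfun; rw [min_self]
  have hcosα : Real.sqrt (k + θ^2) * Real.cos α = θ := by
    rw [cos_alpha hk hθ]; field_simp
  -- cosine comparisons
  have hc1 : Real.cos (α - Real.sqrt k * r) < Real.cos (α - Real.sqrt k * r₁) :=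
    Real.cos_lt_cos_of_nonneg_of_le_pi (by linarith) (by linarith) (by linarith)
  have hc2 : Real.cos α ≤ Real.cos (α - Real.sqrt k * r) :=
    Real.cos_le_cos_of_nonneg_of_le_pi (by linarith) hαpi (by linarith)
  have hc3 : Real.cos α < Real.cos (α - Real.sqrt k * r₁) := by
    have hp : 0 < Real.sqrt k * r₁ := by positivity
    exact Real.cos_lt_cos_of_nonneg_of_le_pi (by linarith) hαpi (by linarith)
  have H₁pos : 0 < Hfun k θ r₁ r₁ := by
    rw [Hr₁_eq, show Real.sqrt (k + θ^2) / k * Real.cos (α - Real.sqrt k * r₁) - θ / k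
      = (Real.sqrt (k + θ^2) * Real.cos (α - Real.sqrt k * r₁) - θ) / k by ring]
    apply div_pos _ hk
    linarith [mul_lt_mul_of_pos_left hc3 hK, hcosα]
  have Hr_nonneg : 0 ≤ Hfun k θ r₁ r := by
    rw [Hr_eq, show Real.sqrt (k + θ^2) / k * Real.cos (α - Real.sqrt k * r) - θ / k
      = (Real.sqrt (k + θ^2) * Real.cos (α - Real.sqrt k * r) - θ) / k by ring]
    apply div_nonneg _ hk.le
    linarith [mul_le_mul_of_nonneg_left hc2 hK.le, hcosα]
  have Hr_lt : Hfun k θ r₁ r < Hfun k θ r₁ r₁ := by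
    rw [Hr_eq, Hr₁_eq]
    have hkk : (0:ℝ) < Real.sqrt (k + θ^2) / k := by positivity
    linarith [mul_lt_mul_of_pos_left hc1 hkk]
  -- the argument of the derivatives of `ell`
  set x := Hfun k θ r₁ r / (2 * Hfun k θ r₁ r₁) with hxdef
  have hx0 : 0 ≤ x := div_nonneg Hr_nonneg (by linarith)
  have hx : x < 1/2 := by
    rw [hxdef, div_lt_iff₀ (by linarith)]
    linarith
  -- bounds on `hfun`
  have hsin0 : 0 ≤ Real.sin (α - Real.sqrt k * r) :=
    Real.sin_nonneg_of_nonneg_of_le_pi (by linarith) (by linarith)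
  have hsinle : Real.sin (α - Real.sqrt k * r) ≤ Real.sin α :=
    Real.sin_le_sin_of_le_of_le_pi_div_two (by linarith [Real.pi_pos]) hα2 (by linarith)
  have hsinα : Real.sqrt (k + θ^2) * Real.sin α = Real.sqrt k := by
    rw [sin_alpha hk hθ]; field_simp
  have hid := hfun_id hk hθ r
  have hfun_nonneg : 0 ≤ hfun k θ r := by
    have h2 : 0 ≤ Real.sqrt k * hfun k θ r := by
      rw [hid]; exact mul_nonneg hK.le hsin0
    exact nonneg_of_mul_nonneg_right h2 hsk
  have hfun_le : hfun k θ r ≤ 1 := by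
    have h3 : Real.sqrt k * hfun k θ r ≤ Real.sqrt k * 1 := by
      rw [hid, mul_one]
      calc Real.sqrt (k + θ^2) * Real.sin (α - Real.sqrt k * r)
          ≤ Real.sqrt (k + θ^2) * Real.sin α := mul_le_mul_of_nonneg_left hsinle hK.le
        _ = Real.sqrt k := hsinα
    exact le_of_mul_le_mul_left h3 hsk
  -- bound on the derivative of `hfun`
  have hQ : (Real.sqrt (θ^2 + k))^2 = θ^2 + k := Real.sq_sqrt (by positivity)
  have hQ0 : 0 ≤ Real.sqrt (θ^2 + k) := Real.sqrt_nonneg _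
  have hder_sq : (deriv (hfun k θ) r)^2 ≤ θ^2 + k := hfun_deriv_sq hk r
  obtain ⟨hder_lb, hder_ub⟩ := abs_from_sq hder_sq (by positivity)
  -- replace derivatives of ell
  rw [ell_deriv hx, ell_deriv2 hx]
  -- abbreviations
  set A := ellD x with hA
  set B := ellD2 x with hB
  set w := d * deriv (hfun k θ) r - z with hw
  set M := d * Real.sqrt (θ^2 + k) + z with hM
  have hApos : 0 ≤ A := ellD_nonneg
  have hAle : Real.exp 2 * A ≤ 4 := ellD_le hx0 hx
  have hBneg : B ≤ 0 := ellD2_nonpos hx0 hx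
  have hBle : Real.exp 2 * (-B) ≤ 20 := ellD2_abs_le hx0 hx
  have hd0 : 0 ≤ d := by linarith
  have hM0 : 0 ≤ M := by
    rw [hM]; positivity
  have hwlb : -M ≤ w := by
    rw [hw, hM]
    exact w_lb hd hz hder_lb
  have he2 : (0:ℝ) < Real.exp 2 := Real.exp_pos 2
  -- main scalar inequality (without σ)
  have t1 : -M ≤ Real.exp 2 / 4 * (A * w) := term1_bound hApos he2 hAle hM0 hwlb
  have hh2 : 0 ≤ (hfun k θ r)^2 := sq_nonneg _
  have hh2le : (hfun k θ r)^2 ≤ 1 := pow_le_one₀ hfun_nonneg hfun_le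
  have t2num : -20 ≤ Real.exp 2 * (B * (hfun k θ r)^2) :=
    term2_bound he2 hBneg hBle hh2 hh2le
  have hc : (0:ℝ) < 2 * Hfun k θ r₁ r₁ := by linarith
  have t2 : -(5 / (2 * Hfun k θ r₁ r₁)) ≤
      Real.exp 2 / 4 * (B * (hfun k θ r)^2 / (2 * Hfun k θ r₁ r₁)) := by
    have hdiv : (-20 : ℝ) / (4 * (2 * Hfun k θ r₁ r₁)) ≤
        Real.exp 2 * (B * (hfun k θ r)^2) / (4 * (2 * Hfun k θ r₁ r₁)) := by
      exact (div_le_div_iff_of_pos_right (by linarith)).mpr t2num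
    calc -(5 / (2 * Hfun k θ r₁ r₁))
        = (-20 : ℝ) / (4 * (2 * Hfun k θ r₁ r₁)) := by
          field_simp
          ring
      _ ≤ Real.exp 2 * (B * (hfun k θ r)^2) / (4 * (2 * Hfun k θ r₁ r₁)) := hdiv
      _ = Real.exp 2 / 4 * (B * (hfun k θ r)^2 / (2 * Hfun k θ r₁ r₁)) := by
          field_simp
  have hmain : -(M + 5 / (2 * Hfun k θ r₁ r₁)) ≤
      Real.exp 2 / 4 * (A * w + B * (hfun k θ r)^2 / (2 * Hfun k θ r₁ r₁)) := by
    have hsplit : Real.exp 2 / 4 * (A * w + B * (hfun k θ r)^2 / (2 * Hfun k θ r₁ r₁))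
        = Real.exp 2 / 4 * (A * w)
          + Real.exp 2 / 4 * (B * (hfun k θ r)^2 / (2 * Hfun k θ r₁ r₁)) := by ring
    rw [hsplit]
    linarith [t1, t2]
  -- multiply by σ
  calc -σ * (d * Real.sqrt (θ^2 + k) + z + 5 / (2 * Hfun k θ r₁ r₁))
      = σ * (-(M + 5 / (2 * Hfun k θ r₁ r₁))) := by rw [hM]; ring
    _ ≤ σ * (Real.exp 2 / 4 * (A * w + B * (hfun k θ r)^2 / (2 * Hfun k θ r₁ r₁))) :=
        mul_le_mul_of_nonneg_left hmain hσ
    _ = σ * Real.exp 2 / 4 * (A * w + B * (hfun k θ r)^2 / (2 * Hfun k θ r₁ r₁)) := by ring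
end
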